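/- For every positive integer n, the identity ∑_{k=1}^{n} (-1)^k · C(n,k)_q · q^{binom(n-k,2)} · (-q;q)_k/[k]_q = q^{binom(n,2)} · ∑_{k=1}^{n} ((-q)^k - 1)/[k]_q holds in the field of rational functions ℚ(q). -/

import Mathlib

open Polynomial Finset

/-- `[n]_q = 1 + q + ⋯ + q^(n-1)` as a polynomial in `ℚ[q]`. -/
noncomputable def qnum (n : ℕ) : ℚ[X] := ∑ i ∈ Finset.range n, X ^ i

/-- The embedding of `ℚ[q]` into the field of rational functions `ℚ(q)`. -/
noncomputable def Φ : ℚ[X] →+* RatFunc ℚ := algebraMap _ _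

/-- `ModPow p k x` says that `x` lies in the ideal generated by `[p]_q ^ k` in the
localization of `ℚ[q]` at the polynomials coprime to the irreducible polynomial
`[p]_q`: that is, `x = [p]_q ^ k · a / b` with `[p]_q ∤ b`. -/
def ModPow (p k : ℕ) (x : RatFunc ℚ) : Prop :=
  ∃ a b : ℚ[X], ¬ (qnum p ∣ b) ∧ x * Φ b = Φ (qnum p ^ k * a)

namespace QGauss

noncomputable def qq : RatFunc ℚ := Φ X
noncomputable def P (m : ℕ) : RatFunc ℚ := Φ (∏ j ∈ Finset.Icc 1 m, (1 - X^j))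
noncomputable def Pp (k : ℕ) : RatFunc ℚ := Φ (∏ i ∈ Finset.Icc 1 k, (1 + X^i))
noncomputable def G (n k : ℕ) : RatFunc ℚ := P n / (P k * P (n - k))
noncomputable def Qn (k : ℕ) : RatFunc ℚ := Φ (qnum k)

lemma phi_ne {p : ℚ[X]} (h : p ≠ 0) : Φ p ≠ 0 := RatFunc.algebraMap_ne_zero h

lemma one_sub_X_pow_ne {j : ℕ} (hj : 1 ≤ j) : (1 - X ^ j : ℚ[X]) ≠ 0 := by
  intro h
  have h2 : ((1 - X ^ j : ℚ[X])).eval 0 = 1 := by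
    simp [zero_pow (by omega : j ≠ 0)]
  rw [h] at h2
  simp at h2

lemma one_add_X_pow_ne {j : ℕ} : (1 + X ^ j : ℚ[X]) ≠ 0 := by
  intro h
  have h2 : ((1 + X ^ j : ℚ[X])).eval 1 = 2 := by norm_num
  rw [h] at h2
  simp at h2

lemma P_ne (m : ℕ) : P m ≠ 0 := by
  apply phi_ne
  apply Finset.prod_ne_zero_iff.2
  intro j hj
  exact one_sub_X_pow_ne (mem_Icc.1 hj).1

lemma Pp_ne (k : ℕ) : Pp k ≠ 0 := by
  apply phi_ne
  apply Finset.prod_ne_zero_iff.2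
  intro j _
  exact one_add_X_pow_ne

lemma P_zero : P 0 = 1 := by simp [P]

lemma Pp_zero : Pp 0 = 1 := by simp [Pp]

lemma P_succ (m : ℕ) : P (m + 1) = P m * (1 - qq ^ (m + 1)) := by
  unfold P qq
  rw [Finset.prod_Icc_succ_top (by omega)]
  push_cast [map_mul, map_sub, map_one, map_pow]
  rfl

lemma Pp_succ (k : ℕ) : Pp (k + 1) = Pp k * (1 + qq ^ (k + 1)) := by
  unfold Pp qq
  rw [Finset.prod_Icc_succ_top (by omega)]
  push_cast [map_mul, map_add, map_one, map_pow]
  rfl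

lemma one_sub_qq_pow_ne {m : ℕ} (hm : 1 ≤ m) : (1 : RatFunc ℚ) - qq ^ m ≠ 0 := by
  have : (1 : RatFunc ℚ) - qq ^ m = Φ (1 - X ^ m) := by
    simp [qq, map_sub, map_pow]
  rw [this]
  exact phi_ne (one_sub_X_pow_ne hm)

lemma qq_sub_one_ne : qq - 1 ≠ 0 := by
  have : qq - 1 = Φ (X - 1) := by simp [qq, map_sub]
  rw [this]
  apply phi_ne
  intro h
  have h2 : ((X - 1 : ℚ[X])).eval 0 = -1 := by simp
  rw [h] at h2
  simp at h2

lemma Qn_spec (k : ℕ) : Qn k * (qq - 1) = qq ^ k - 1 := by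
  have := congrArg Φ (geom_sum_mul (X : ℚ[X]) k)
  simpa [Qn, qnum, qq, map_mul, map_sub, map_pow, map_sum, map_one] using this

lemma Qn_ne {k : ℕ} (hk : 1 ≤ k) : Qn k ≠ 0 := by
  intro h
  have := Qn_spec k
  rw [h, zero_mul] at this
  have h2 : (1 : RatFunc ℚ) - qq ^ k = 0 := by linear_combination this
  exact one_sub_qq_pow_ne hk h2

lemma G_add (x y : ℕ) : G (x + y) x = P (x + y) / (P x * P y) := by
  simp [G, Nat.add_sub_cancel_left]

lemma G_self (n : ℕ) : G n n = 1 := by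
  have := G_add n 0
  simp only [Nat.add_zero, P_zero, mul_one] at this
  rw [this, div_self (P_ne n)]

lemma G_zero (n : ℕ) : G n 0 = 1 := by
  have := G_add 0 n
  simp only [Nat.zero_add, P_zero, one_mul] at this
  rw [show n = 0 + n from (Nat.zero_add n).symm] at this ⊢
  rw [this, div_self (P_ne (0 + n))]

lemma pascal1 (a b : ℕ) :
    G (a + b + 2) (a + 1) = qq ^ (a + 1) * G (a + b + 1) (a + 1) + G (a + b + 1) a := by
  have e1 : G (a + b + 2) (a + 1) = P (a + b + 2) / (P (a+1) * P (b+1)) := by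
    rw [show a + b + 2 = (a+1) + (b+1) by ring, G_add]
  have e2 : G (a + b + 1) (a + 1) = P (a + b + 1) / (P (a+1) * P b) := by
    rw [show a + b + 1 = (a+1) + b by ring, G_add]
  have e3 : G (a + b + 1) a = P (a + b + 1) / (P a * P (b+1)) := by
    rw [show a + b + 1 = a + (b+1) by ring, G_add]
  rw [e1, e2, e3, P_succ (a+b+1), P_succ a, P_succ b]
  have h1 := P_ne a; have h2 := P_ne b; have h3 := P_ne (a+b+1)
  have h4 := one_sub_qq_pow_ne (show 1 ≤ a+1 by omega)
  have h5 := one_sub_qq_pow_ne (show 1 ≤ b+1 by omega)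
  field_simp
  ring

lemma pascal2 (a b : ℕ) :
    G (a + b + 2) (a + 1) = G (a + b + 1) (a + 1) + qq ^ (b + 1) * G (a + b + 1) a := by
  have e1 : G (a + b + 2) (a + 1) = P (a + b + 2) / (P (a+1) * P (b+1)) := by
    rw [show a + b + 2 = (a+1) + (b+1) by ring, G_add]
  have e2 : G (a + b + 1) (a + 1) = P (a + b + 1) / (P (a+1) * P b) := by
    rw [show a + b + 1 = (a+1) + b by ring, G_add]
  have e3 : G (a + b + 1) a = P (a + b + 1) / (P a * P (b+1)) := by
    rw [show a + b + 1 = a + (b+1) by ring, G_add]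
  rw [e1, e2, e3, P_succ (a+b+1), P_succ a, P_succ b]
  have h1 := P_ne a; have h2 := P_ne b; have h3 := P_ne (a+b+1)
  have h4 := one_sub_qq_pow_ne (show 1 ≤ a+1 by omega)
  have h5 := one_sub_qq_pow_ne (show 1 ≤ b+1 by omega)
  field_simp
  ring

lemma trinomial (a b c : ℕ) :
    G (a + b + c) (a + b) * G (a + b) a = G (a + b + c) a * G (b + c) b := by
  have e1 : G (a + b + c) (a + b) = P (a + b + c) / (P (a+b) * P c) := by
    rw [show a + b + c = (a+b) + c by ring, G_add]
  have e2 : G (a + b) a = P (a + b) / (P a * P b) := G_add a b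
  have e3 : G (a + b + c) a = P (a + b + c) / (P a * P (b+c)) := by
    rw [show a + b + c = a + (b+c) by ring, G_add]
  have e4 : G (b + c) b = P (b + c) / (P b * P c) := G_add b c
  rw [e1, e2, e3, e4]
  have h1 := P_ne a; have h2 := P_ne b; have h3 := P_ne c
  have h4 := P_ne (a+b); have h5 := P_ne (b+c)
  field_simp

lemma switch (a b : ℕ) :
    G (a + b) a * Qn (a + b + 1) = G (a + b + 1) (a + 1) * Qn (a + 1) := by
  apply mul_right_cancel₀ qq_sub_one_ne
  rw [mul_assoc, mul_assoc, Qn_spec, Qn_spec]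
  have e1 : G (a + b) a = P (a + b) / (P a * P b) := G_add a b
  have e2 : G (a + b + 1) (a + 1) = P (a + b + 1) / (P (a+1) * P b) := by
    rw [show a + b + 1 = (a+1) + b by ring, G_add]
  rw [e1, e2, P_succ (a+b), P_succ a]
  have h1 := P_ne a; have h2 := P_ne b; have h3 := P_ne (a+b)
  have h4 := one_sub_qq_pow_ne (show 1 ≤ a+1 by omega)
  field_simp
  ring

lemma choose2_succ (m : ℕ) : (m + 1).choose 2 = m.choose 2 + m := by
  rw [Nat.choose_succ_succ, Nat.choose_one_right, Nat.add_comm]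

lemma sumS (N : ℕ) :
    ∑ m ∈ Finset.range (N + 1), (-1 : RatFunc ℚ) ^ m * G N m * qq ^ ((N - m).choose 2)
      = if N = 0 then 1 else 0 := by
  cases N with
  | zero => simp [G_self]
  | succ M =>
    simp only [Nat.succ_ne_zero, if_false]
    set a : ℕ → RatFunc ℚ := fun m =>
      if m ≤ M then (-1 : RatFunc ℚ) ^ m * G M m * qq ^ ((M - m).choose 2 + (M - m)) else 0
      with ha
    set b : ℕ → RatFunc ℚ := fun m =>
      if 1 ≤ m then (-1 : RatFunc ℚ) ^ m * qq ^ (M + 1 - m) * G M (m - 1)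
        * qq ^ ((M + 1 - m).choose 2) else 0 with hb
    have ht : ∀ m ∈ Finset.range (M + 2),
        (-1 : RatFunc ℚ) ^ m * G (M+1) m * qq ^ ((M + 1 - m).choose 2) = a m + b m := by
      intro m hm
      rw [Finset.mem_range] at hm
      rcases eq_or_ne m 0 with rfl | hm0
      · simp only [ha, hb]
        rw [if_pos (Nat.zero_le M), if_neg (show ¬ (1:ℕ) ≤ 0 by omega)]
        rw [G_zero, G_zero, Nat.sub_zero, Nat.sub_zero, choose2_succ]
        ring
      rcases eq_or_ne m (M + 1) with rfl | hm1
      · simp only [ha, hb]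
        rw [if_neg (show ¬ M + 1 ≤ M by omega), if_pos (show 1 ≤ M + 1 by omega)]
        rw [Nat.sub_self, Nat.add_sub_cancel, G_self, G_self]
        simp
      · obtain ⟨m', rfl⟩ : ∃ m', m = m' + 1 := ⟨m - 1, by omega⟩
        obtain ⟨d', rfl⟩ : ∃ d', M = m' + (d' + 1) := ⟨M - m' - 1, by omega⟩
        have hp := pascal2 m' d'
        rw [show m' + d' + 2 = m' + (d' + 1) + 1 by ring] at hp
        rw [hp]
        simp only [ha, hb, show m' + (d' + 1) = m' + d' + 1 from by ring]
        rw [if_pos (show m' + 1 ≤ m' + d' + 1 by omega), if_pos (show 1 ≤ m' + 1 by omega)]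
        rw [show m' + d' + 1 + 1 - (m' + 1) = d' + 1 by omega,
            show m' + d' + 1 - (m' + 1) = d' by omega,
            show m' + 1 - 1 = m' by omega, choose2_succ]
        ring
    rw [Finset.sum_congr rfl ht, Finset.sum_add_distrib]
    have hA : ∑ m ∈ Finset.range (M + 2), a m = ∑ m ∈ Finset.range (M + 1), a m := by
      rw [Finset.sum_range_succ, ha]
      simp
    have hB : ∑ m ∈ Finset.range (M + 2), b m = ∑ m ∈ Finset.range (M + 1), b (m + 1) := by
      rw [Finset.sum_range_succ', hb]
      simp
    rw [hA, hB, ← Finset.sum_add_distrib]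
    apply Finset.sum_eq_zero
    intro m hm
    rw [Finset.mem_range] at hm
    obtain ⟨c, rfl⟩ : ∃ c, M = m + c := ⟨M - m, by omega⟩
    simp only [ha, hb]
    rw [if_pos (show m ≤ m + c by omega), if_pos (show 1 ≤ m + 1 by omega)]
    rw [show m + c + 1 - (m + 1) = c by omega, show m + c - m = c by omega,
        show m + 1 - 1 = m by omega]
    ring

lemma PpSum (k : ℕ) :
    Pp k = ∑ j ∈ Finset.range (k + 1), G k j * qq ^ (j.choose 2 + j) := by
  induction k with
  | zero => simp [Pp_zero, G_self]
  | succ k ih =>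
    set a : ℕ → RatFunc ℚ := fun j =>
      if j ≤ k then G k j * qq ^ (j.choose 2 + j) else 0 with ha
    set b : ℕ → RatFunc ℚ := fun j =>
      if 1 ≤ j then qq ^ (k + 1 - j) * G k (j - 1) * qq ^ (j.choose 2 + j) else 0 with hb
    have ht : ∀ j ∈ Finset.range (k + 2),
        G (k+1) j * qq ^ (j.choose 2 + j) = a j + b j := by
      intro j hj
      rw [Finset.mem_range] at hj
      rcases eq_or_ne j 0 with rfl | hj0
      · simp only [ha, hb]
        rw [if_pos (Nat.zero_le k), if_neg (show ¬ (1:ℕ) ≤ 0 by omega)]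
        rw [G_zero, G_zero]
        ring
      rcases eq_or_ne j (k + 1) with rfl | hj1
      · simp only [ha, hb]
        rw [if_neg (show ¬ k + 1 ≤ k by omega), if_pos (show 1 ≤ k + 1 by omega)]
        rw [Nat.sub_self, Nat.add_sub_cancel, G_self, G_self]
        ring
      · obtain ⟨j', rfl⟩ : ∃ j', j = j' + 1 := ⟨j - 1, by omega⟩
        obtain ⟨d', rfl⟩ : ∃ d', k = j' + (d' + 1) := ⟨k - j' - 1, by omega⟩
        have hp := pascal2 j' d'
        rw [show j' + d' + 2 = j' + (d' + 1) + 1 by ring] at hp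
        rw [hp]
        simp only [ha, hb, show j' + (d' + 1) = j' + d' + 1 from by ring]
        rw [if_pos (show j' + 1 ≤ j' + d' + 1 by omega), if_pos (show 1 ≤ j' + 1 by omega)]
        rw [show j' + d' + 1 + 1 - (j' + 1) = d' + 1 by omega,
            show j' + 1 - 1 = j' by omega]
        ring
    rw [Finset.sum_congr rfl ht, Finset.sum_add_distrib]
    have hA : ∑ j ∈ Finset.range (k + 2), a j = Pp k := by
      rw [Finset.sum_range_succ, ha]
      simp only [if_neg (show ¬ k + 1 ≤ k by omega), add_zero]
      rw [ih]
      refine Finset.sum_congr rfl fun j hj => ?_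
      rw [Finset.mem_range] at hj
      rw [if_pos (show j ≤ k by omega)]
    have hB : ∑ j ∈ Finset.range (k + 2), b j = qq ^ (k+1) * Pp k := by
      rw [Finset.sum_range_succ', hb]
      simp only [if_neg (show ¬ (1:ℕ) ≤ 0 by omega), add_zero]
      rw [ih, Finset.mul_sum]
      refine Finset.sum_congr rfl fun j hj => ?_
      rw [Finset.mem_range] at hj
      rw [if_pos (show 1 ≤ j + 1 by omega), Nat.add_sub_cancel]
      obtain ⟨c, rfl⟩ : ∃ c, k = j + c := ⟨k - j, by omega⟩
      rw [show j + c + 1 - (j + 1) = c by omega, choose2_succ]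
      ring
    rw [hA, hB, Pp_succ]
    ring

lemma sumD (n : ℕ) :
    ∑ k ∈ Finset.range (n + 1),
        (-1 : RatFunc ℚ) ^ k * G n k * (qq ^ ((n - k).choose 2) * Pp k)
      = (-1) ^ n * qq ^ ((n + 1).choose 2) := by
  have h1 : ∀ k ∈ Finset.range (n + 1),
      (-1 : RatFunc ℚ) ^ k * G n k * (qq ^ ((n - k).choose 2) * Pp k)
        = ∑ j ∈ Finset.range (k + 1),
            (-1 : RatFunc ℚ) ^ k * G n k * qq ^ ((n - k).choose 2)
              * (G k j * qq ^ (j.choose 2 + j)) := by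
    intro k _
    rw [PpSum k, Finset.mul_sum, Finset.mul_sum]
    apply Finset.sum_congr rfl
    intro j _
    ring
  rw [Finset.sum_congr rfl h1]
  have h2 : ∑ k ∈ Finset.range (n + 1), ∑ j ∈ Finset.range (k + 1),
        (-1 : RatFunc ℚ) ^ k * G n k * qq ^ ((n - k).choose 2)
          * (G k j * qq ^ (j.choose 2 + j))
      = ∑ j ∈ Finset.range (n + 1), ∑ k ∈ Finset.Icc j n,
          (-1 : RatFunc ℚ) ^ k * G n k * qq ^ ((n - k).choose 2)
            * (G k j * qq ^ (j.choose 2 + j)) := by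
    have h2' := (Finset.sum_Ico_Ico_comm 0 (n + 1) (fun j k =>
      (-1 : RatFunc ℚ) ^ k * G n k * qq ^ ((n - k).choose 2)
        * (G k j * qq ^ (j.choose 2 + j)))).symm
    simp only [← Finset.range_eq_Ico] at h2'
    simp only [Finset.Ico_add_one_right_eq_Icc] at h2'
    exact h2'
  rw [h2]
  have h3 : ∀ j ∈ Finset.range (n + 1),
      (∑ k ∈ Finset.Icc j n,
          (-1 : RatFunc ℚ) ^ k * G n k * qq ^ ((n - k).choose 2)
            * (G k j * qq ^ (j.choose 2 + j)))
        = (-1) ^ j * G n j * qq ^ (j.choose 2 + j)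
            * (if n - j = 0 then 1 else 0) := by
    intro j hj
    rw [Finset.mem_range] at hj
    obtain ⟨c, rfl⟩ : ∃ c, n = j + c := ⟨n - j, by omega⟩
    rw [← Finset.Ico_add_one_right_eq_Icc, Finset.sum_Ico_eq_sum_range,
      show j + c + 1 - j = c + 1 by omega]
    have h4 : ∀ m ∈ Finset.range (c + 1),
        (-1 : RatFunc ℚ) ^ (j + m) * G (j + c) (j + m) * qq ^ ((j + c - (j + m)).choose 2)
            * (G (j + m) j * qq ^ (j.choose 2 + j))
          = ((-1) ^ j * G (j + c) j * qq ^ (j.choose 2 + j))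
              * ((-1) ^ m * G c m * qq ^ ((c - m).choose 2)) := by
      intro m hm
      rw [Finset.mem_range] at hm
      obtain ⟨e, rfl⟩ : ∃ e, c = m + e := ⟨c - m, by omega⟩
      have hp := trinomial j m e
      simp only [show j + (m + e) = j + m + e from by ring,
        show j + m + e - (j + m) = e from by omega,
        show m + e - m = e from by omega]
      rw [pow_add]
      linear_combination (qq ^ (e.choose 2) * qq ^ (j.choose 2 + j)
        * (-1 : RatFunc ℚ) ^ j * (-1 : RatFunc ℚ) ^ m) * hp
    rw [Finset.sum_congr rfl h4, ← Finset.mul_sum, sumS c,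
      show j + c - j = c by omega]
  rw [Finset.sum_congr rfl h3]
  rw [Finset.sum_eq_single_of_mem n (Finset.self_mem_range_succ n)]
  · rw [Nat.sub_self, if_pos rfl, G_self, choose2_succ]
    ring
  · intro b hb hbn
    rw [Finset.mem_range] at hb
    rw [if_neg (by omega), mul_zero]

lemma Qn_one : Qn 1 = 1 := by
  simp [Qn, qnum]

lemma main (n : ℕ) (hn : 1 ≤ n) :
    ∑ k ∈ Finset.Icc 1 n,
        (-1 : RatFunc ℚ) ^ k * G n k * (qq ^ ((n - k).choose 2) * Pp k) / Qn k
      = qq ^ (n.choose 2) * ∑ k ∈ Finset.Icc 1 n, ((-qq) ^ k - 1) / Qn k := by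
  induction n, hn using Nat.le_induction with
  | base =>
    rw [Finset.Icc_self, Finset.sum_singleton, Finset.sum_singleton]
    rw [G_self, Qn_one, show (1:ℕ) - 1 = 0 from rfl, show Nat.choose 0 2 = 0 from rfl,
      show Nat.choose 1 2 = 0 from rfl, show (1:ℕ) = 0 + 1 from rfl, Pp_succ, Pp_zero]
    ring
  | succ n hn ih =>
    have hQ1 : Qn (n + 1) ≠ 0 := Qn_ne (by omega)
    have hterm : ∀ k ∈ Finset.Icc 1 (n + 1),
        (-1 : RatFunc ℚ) ^ k * G (n+1) k * (qq ^ ((n + 1 - k).choose 2) * Pp k) / Qn k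
          = qq ^ n * (if k ≤ n then
                (-1 : RatFunc ℚ) ^ k * G n k * (qq ^ ((n - k).choose 2) * Pp k) / Qn k
              else 0)
            + (-1 : RatFunc ℚ) ^ k * G n (k - 1) * (qq ^ ((n + 1 - k).choose 2) * Pp k)
                / Qn k := by
      intro k hk
      rw [Finset.mem_Icc] at hk
      rcases eq_or_ne k (n + 1) with rfl | hk1
      · rw [if_neg (by omega), mul_zero, zero_add, Nat.sub_self, Nat.add_sub_cancel,
          G_self, G_self]
      · obtain ⟨a, rfl⟩ : ∃ a, k = a + 1 := ⟨k - 1, by omega⟩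
        obtain ⟨b, rfl⟩ : ∃ b, n = a + b + 1 := ⟨n - a - 1, by omega⟩
        rw [if_pos (by omega)]
        have hp := pascal1 a b
        rw [show a + b + 1 + 1 = a + b + 2 from by ring, hp]
        rw [show a + b + 2 - (a + 1) = b + 1 by omega,
          show a + b + 1 - (a + 1) = b by omega,
          show a + 1 - 1 = a by omega, choose2_succ b]
        ring
    rw [Finset.sum_congr rfl hterm, Finset.sum_add_distrib, ← Finset.mul_sum]
    have hA : ∑ k ∈ Finset.Icc 1 (n + 1), (if k ≤ n then
          (-1 : RatFunc ℚ) ^ k * G n k * (qq ^ ((n - k).choose 2) * Pp k) / Qn k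
        else 0)
        = ∑ k ∈ Finset.Icc 1 n,
            (-1 : RatFunc ℚ) ^ k * G n k * (qq ^ ((n - k).choose 2) * Pp k) / Qn k := by
      rw [← Finset.sum_subset (Finset.Icc_subset_Icc_right (by omega : n ≤ n + 1))]
      · apply Finset.sum_congr rfl
        intro k hk
        rw [Finset.mem_Icc] at hk
        rw [if_pos hk.2]
      · intro k hk hk2
        rw [Finset.mem_Icc] at hk
        rw [Finset.mem_Icc] at hk2
        rw [if_neg (by omega)]
    have hB : ∑ k ∈ Finset.Icc 1 (n + 1),
          (-1 : RatFunc ℚ) ^ k * G n (k - 1) * (qq ^ ((n + 1 - k).choose 2) * Pp k) / Qn k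
        = ((-1) ^ (n+1) * qq ^ ((n + 2).choose 2) - qq ^ ((n + 1).choose 2)) / Qn (n + 1) := by
      have hsw : ∀ k ∈ Finset.Icc 1 (n + 1),
          (-1 : RatFunc ℚ) ^ k * G n (k - 1) * (qq ^ ((n + 1 - k).choose 2) * Pp k) / Qn k
            = ((-1 : RatFunc ℚ) ^ k * G (n+1) k * (qq ^ ((n + 1 - k).choose 2) * Pp k))
                / Qn (n + 1) := by
        intro k hk
        rw [Finset.mem_Icc] at hk
        obtain ⟨a, rfl⟩ : ∃ a, k = a + 1 := ⟨k - 1, by omega⟩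
        have hs := switch a (n - a)
        rw [show a + (n - a) = n by omega] at hs
        rw [Nat.add_sub_cancel]
        rw [div_eq_div_iff (Qn_ne (show 1 ≤ a + 1 by omega)) hQ1]
        linear_combination ((-1 : RatFunc ℚ) ^ (a+1)
          * (qq ^ ((n + 1 - (a+1)).choose 2) * Pp (a+1))) * hs
      rw [Finset.sum_congr rfl hsw, ← Finset.sum_div]
      congr 1
      have hD := sumD (n + 1)
      rw [Finset.range_eq_Ico, Finset.sum_eq_sum_Ico_succ_bot (by omega : 0 < n + 2),
        show n + 2 = n + 1 + 1 from rfl, Finset.Ico_add_one_right_eq_Icc] at hD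
      rw [G_zero, Pp_zero, Nat.sub_zero] at hD
      linear_combination hD
    rw [hA, hB, ih, Finset.sum_Icc_succ_top (show (1:ℕ) ≤ n + 1 by omega)]
    rw [choose2_succ (n+1), choose2_succ n, neg_pow]
    field_simp
    ring

end QGauss

/-- The identity
`∑_{k=1}^n (-1)^k C(n,k)_q q^(C(n-k,2)) (-q;q)_k/[k]_q
  = q^(C(n,2)) ∑_{k=1}^n ((-q)^k - 1)/[k]_q`
in the field of rational functions `ℚ(q)`, where the Gaussian binomial coefficient is
`C(n,k)_q = (q;q)_n/((q;q)_k (q;q)_{n-k})`. -/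
theorem q_gauss_sum_identity (n : ℕ) (hn : 0 < n) :
    ∑ k ∈ Finset.Icc 1 n,
      (-1)^k
        * (Φ (∏ j ∈ Finset.Icc 1 n, (1 - X^j))
            / (Φ (∏ j ∈ Finset.Icc 1 k, (1 - X^j))
                * Φ (∏ j ∈ Finset.Icc 1 (n-k), (1 - X^j))))
        * Φ (X^(Nat.choose (n-k) 2) * ∏ i ∈ Finset.Icc 1 k, (1 + X^i))
        / Φ (qnum k)
    = Φ (X^(Nat.choose n 2))
        * ∑ k ∈ Finset.Icc 1 n, ((-Φ X)^k - 1) / Φ (qnum k) := by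
  have hmain := QGauss.main n hn
  have hL : ∑ k ∈ Finset.Icc 1 n,
      (-1)^k
        * (Φ (∏ j ∈ Finset.Icc 1 n, (1 - X^j))
            / (Φ (∏ j ∈ Finset.Icc 1 k, (1 - X^j))
                * Φ (∏ j ∈ Finset.Icc 1 (n-k), (1 - X^j))))
        * Φ (X^(Nat.choose (n-k) 2) * ∏ i ∈ Finset.Icc 1 k, (1 + X^i))
        / Φ (qnum k)
      = ∑ k ∈ Finset.Icc 1 n,
          (-1 : RatFunc ℚ) ^ k * QGauss.G n k
            * (QGauss.qq ^ ((n - k).choose 2) * QGauss.Pp k) / QGauss.Qn k := by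
    refine Finset.sum_congr rfl fun k _ => ?_
    simp only [QGauss.G, QGauss.P, QGauss.Pp, QGauss.Qn, QGauss.qq, map_mul, map_pow]
  rw [hL, hmain]
  simp only [QGauss.qq, QGauss.Qn, QGauss.Pp, map_pow]
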